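/- Branching-tree lower bound (construction 2): let h ∈ ℕ and let R5 ⊆ (Bool × Bool × Bool × Bool × Bool) be a 5-ary Boolean relation with (true,false,true,false,false) ∉ R5 and (false,true,true,false,false) ∉ R5. Let l, r : ℕ → Bool satisfy l i ≠ r i for all i < h, and let x : ℕ → ℕ → Bool satisfy x 0 0 = true and (l i, r i, x i j, x (i+1) (2j), x (i+1) (2j+1)) ∈ R5 for all i < h and j < 2^i. Then for every i ≤ h there exists j < 2^i with x i j = true; in particular some leaf variable x h j is true. -/
import Mathlib


theorem stmt_13 (h : ℕ) (R5 : Set (Bool × Bool × Bool × Bool × Bool))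
    (h1 : (true, false, true, false, false) ∉ R5)
    (h2 : (false, true, true, false, false) ∉ R5)
    (l r : ℕ → Bool) (hlr : ∀ i < h, l i ≠ r i)
    (x : ℕ → ℕ → Bool) (hx0 : x 0 0 = true)
    (hstep : ∀ i < h, ∀ j < 2 ^ i,
      (l i, r i, x i j, x (i + 1) (2 * j), x (i + 1) (2 * j + 1)) ∈ R5) :
    ∀ i ≤ h, ∃ j < 2 ^ i, x i j = true := by
  intro i
  induction i with
  | zero => intro _; exact ⟨0, by norm_num, hx0⟩
  | succ i ih =>
    intro hih
    obtain ⟨j, hj, hxj⟩ := ih (le_of_lt hih)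
    have hi : i < h := hih
    have hstep' := hstep i hi j hj
    by_cases hL : x (i + 1) (2 * j) = true
    · exact ⟨2 * j, by omega, hL⟩
    by_cases hR : x (i + 1) (2 * j + 1) = true
    · exact ⟨2 * j + 1, by omega, hR⟩
    exfalso
    rw [Bool.not_eq_true] at hL hR
    rw [hL, hR] at hstep'
    have := hlr i hi
    cases hl : l i <;> cases hr : r i <;> rw [hl, hr] at hstep' this <;>
      simp_all
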